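/- Let μ and ν be Borel probability measures on ℝ^m with finite first moments, and let d = sup { ∫ f dμ − ∫ f dν : f : ℝ^m → ℝ is 1-Lipschitz and integrable with respect to both μ and ν }. Let h : ℝ^m → ℝ be Lipschitz with constant l_h and satisfy |h(x)| ≤ 1 for all x, let g : ℝ^m → ℝ be Lipschitz with constant l_g and satisfy |g(x)| ≤ 1 for all x, and let p > 0 be a real number. Assume h·g is integrable with respect to both μ and ν. Then |(1/p) ∫ h·g dμ − (1/p) ∫ h·g dν| ≤ ((l_h + l_g)/p) · d. -/

import Mathlib

open MeasureTheory
open scoped NNReal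

/-- Kantorovich–Rubinstein bound on the equal-opportunity gap: if `d` is the
dual formulation of the 1-Wasserstein distance between the group feature
distributions `μ` and `ν`, `h` is an `l_h`-Lipschitz decision model bounded by
1, `g` is an `l_g`-Lipschitz labeling model bounded by 1, and `p > 0` is the
base rate, then `|(1/p) ∫ h·g dμ − (1/p) ∫ h·g dν| ≤ ((l_h + l_g)/p) · d`. -/
theorem eo_bounded_by_wasserstein {m : ℕ}
    (μ ν : Measure (Fin m → ℝ)) [IsProbabilityMeasure μ] [IsProbabilityMeasure ν]
    (hμmom : Integrable (fun x => ‖x‖) μ) (hνmom : Integrable (fun x => ‖x‖) ν)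
    (d : ℝ)
    (hd : d = sSup {r : ℝ | ∃ f : (Fin m → ℝ) → ℝ, LipschitzWith 1 f ∧
      Integrable f μ ∧ Integrable f ν ∧ r = (∫ x, f x ∂μ) - ∫ x, f x ∂ν})
    (h g : (Fin m → ℝ) → ℝ) (lh lg : ℝ≥0)
    (hh : LipschitzWith lh h) (hg : LipschitzWith lg g)
    (hhb : ∀ x, |h x| ≤ 1) (hgb : ∀ x, |g x| ≤ 1)
    (p : ℝ) (hp : 0 < p)
    (hhgμ : Integrable (fun x => h x * g x) μ)
    (hhgν : Integrable (fun x => h x * g x) ν) :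
    |(1 / p) * (∫ x, h x * g x ∂μ) - (1 / p) * ∫ x, h x * g x ∂ν| ≤
      (((lh : ℝ) + (lg : ℝ)) / p) * d := by
  set S := {r : ℝ | ∃ f : (Fin m → ℝ) → ℝ, LipschitzWith 1 f ∧
      Integrable f μ ∧ Integrable f ν ∧ r = (∫ x, f x ∂μ) - ∫ x, f x ∂ν} with hS
  have hbdd : BddAbove S := by
    refine ⟨(∫ x, ‖x‖ ∂μ) + ∫ x, ‖x‖ ∂ν, ?_⟩
    rintro r ⟨f, hf, hfμ, hfν, rfl⟩
    have hub : ∫ x, f x ∂μ ≤ f 0 + ∫ x, ‖x‖ ∂μ := by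
      have hle : ∫ x, f x ∂μ ≤ ∫ x, (f 0 + ‖x‖) ∂μ := by
        refine integral_mono hfμ ((integrable_const _).add hμmom) (fun x => ?_)
        have h1 := hf.dist_le_mul x 0
        rw [Real.dist_eq, NNReal.coe_one, one_mul, dist_zero_right] at h1
        have := abs_le.1 h1
        linarith [this.2]
      rwa [integral_add (integrable_const _) hμmom, integral_const,
        probReal_univ, one_smul] at hle
    have hlb : f 0 - ∫ x, ‖x‖ ∂ν ≤ ∫ x, f x ∂ν := by
      have hle : ∫ x, (f 0 - ‖x‖) ∂ν ≤ ∫ x, f x ∂ν := by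
        refine integral_mono ((integrable_const _).sub hνmom) hfν (fun x => ?_)
        have h1 := hf.dist_le_mul x 0
        rw [Real.dist_eq, NNReal.coe_one, one_mul, dist_zero_right] at h1
        have := abs_le.1 h1
        linarith [this.1]
      rwa [integral_sub (integrable_const _) hνmom, integral_const,
        probReal_univ, one_smul] at hle
    linarith
  by_cases hc : (lh : ℝ) + (lg : ℝ) = 0
  · -- both Lipschitz constants are zero, so h and g are constant
    have hlh : (lh : ℝ) = 0 := le_antisymm (by nlinarith [lg.coe_nonneg]) lh.coe_nonneg
    have hlg : (lg : ℝ) = 0 := le_antisymm (by nlinarith [lh.coe_nonneg]) lg.coe_nonneg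
    have hconst : ∀ x, h x * g x = h 0 * g 0 := by
      intro x
      have h1 := hh.dist_le_mul x 0
      have h2 := hg.dist_le_mul x 0
      rw [hlh, zero_mul] at h1
      rw [hlg, zero_mul] at h2
      have e1 : h x = h 0 := by
        have := dist_nonneg (x := h x) (y := h 0)
        have : dist (h x) (h 0) = 0 := le_antisymm h1 this
        exact dist_eq_zero.1 this
      have e2 : g x = g 0 := by
        have := dist_nonneg (x := g x) (y := g 0)
        have : dist (g x) (g 0) = 0 := le_antisymm h2 this
        exact dist_eq_zero.1 this
      rw [e1, e2]
    have hμint : ∫ x, h x * g x ∂μ = h 0 * g 0 := by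
      rw [integral_congr_ae (Filter.Eventually.of_forall hconst), integral_const,
        probReal_univ, one_smul]
    have hνint : ∫ x, h x * g x ∂ν = h 0 * g 0 := by
      rw [integral_congr_ae (Filter.Eventually.of_forall hconst), integral_const,
        probReal_univ, one_smul]
    rw [hμint, hνint, hc]
    simp
  · have he : (0 : ℝ) < (lh : ℝ) + (lg : ℝ) := by
      rcases lt_or_eq_of_le (by positivity : (0:ℝ) ≤ (lh : ℝ) + (lg : ℝ)) with h' | h'
      · exact h'
      · exact absurd h'.symm hc
    set e : ℝ := (lh : ℝ) + (lg : ℝ) with hedef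
    -- the product h*g is e-Lipschitz
    have hprod : ∀ x y, |h x * g x - h y * g y| ≤ e * dist x y := by
      intro x y
      have h1 := hh.dist_le_mul x y
      have h2 := hg.dist_le_mul x y
      rw [Real.dist_eq] at h1 h2
      calc |h x * g x - h y * g y|
          = |h x * (g x - g y) + g y * (h x - h y)| := by ring_nf
        _ ≤ |h x * (g x - g y)| + |g y * (h x - h y)| := abs_add_le _ _
        _ = |h x| * |g x - g y| + |g y| * |h x - h y| := by rw [abs_mul, abs_mul]
        _ ≤ 1 * ((lg : ℝ) * dist x y) + 1 * ((lh : ℝ) * dist x y) :=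
            add_le_add (mul_le_mul (hhb x) h2 (abs_nonneg _) zero_le_one)
              (mul_le_mul (hgb y) h1 (abs_nonneg _) zero_le_one)
        _ = e * dist x y := by rw [hedef]; ring
    have hfl : LipschitzWith 1 (fun x => h x * g x / e) := by
      apply LipschitzWith.of_dist_le_mul
      intro x y
      rw [Real.dist_eq, NNReal.coe_one, one_mul, div_sub_div_same, abs_div,
        abs_of_pos he, div_le_iff₀ he]
      exact le_of_le_of_eq (hprod x y) (mul_comm _ _)
    have hflneg : LipschitzWith 1 (fun x => -(h x * g x / e)) := hfl.neg
    have hmem1 : (∫ x, h x * g x / e ∂μ) - ∫ x, h x * g x / e ∂ν ∈ S :=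
      ⟨_, hfl, hhgμ.div_const e, hhgν.div_const e, rfl⟩
    have hmem2 : (∫ x, -(h x * g x / e) ∂μ) - ∫ x, -(h x * g x / e) ∂ν ∈ S :=
      ⟨_, hflneg, (hhgμ.div_const e).neg, (hhgν.div_const e).neg, rfl⟩
    have hle1 : (∫ x, h x * g x / e ∂μ) - ∫ x, h x * g x / e ∂ν ≤ d :=
      hd ▸ le_csSup hbdd hmem1
    have hle2 : (∫ x, -(h x * g x / e) ∂μ) - ∫ x, -(h x * g x / e) ∂ν ≤ d :=
      hd ▸ le_csSup hbdd hmem2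
    rw [integral_neg, integral_neg] at hle2
    rw [integral_div, integral_div] at hle1 hle2
    have hle1' : ((∫ x, h x * g x ∂μ) - ∫ x, h x * g x ∂ν) / e ≤ d := by
      rw [sub_div]; exact hle1
    have hle2' : ((∫ x, h x * g x ∂ν) - ∫ x, h x * g x ∂μ) / e ≤ d := by
      rw [sub_div]; linarith
    have habs : |(∫ x, h x * g x ∂μ) - ∫ x, h x * g x ∂ν| ≤ e * d := by
      have t1 := (div_le_iff₀ he).1 hle1'
      have t2 := (div_le_iff₀ he).1 hle2'
      rw [mul_comm] at t1 t2
      rw [abs_le]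
      constructor <;> linarith
    calc |(1 / p) * (∫ x, h x * g x ∂μ) - (1 / p) * ∫ x, h x * g x ∂ν|
        = (1 / p) * |(∫ x, h x * g x ∂μ) - ∫ x, h x * g x ∂ν| := by
          rw [← mul_sub, abs_mul, abs_of_nonneg (by positivity : (0:ℝ) ≤ 1 / p)]
      _ ≤ (1 / p) * (e * d) := mul_le_mul_of_nonneg_left habs (by positivity)
      _ = (e / p) * d := by ring
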